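/- If C is a lextensive category, then the inclusion C ↪ Span_C preserves finite coproducts: for a finite coproduct A = ∐_{i∈I} A_i in C, the object A together with the spans induced by the coproduct inclusions is a coproduct of (A_i)_{i∈I} in the bicategory Span_C, i.e. for every object B there is an equivalence of hom-categories Span_C(A, B) = C/(A × B) ≃ ∏_{i∈I} C/(A_i × B) = ∏_{i∈I} Span_C(A_i, B). -/

import Mathlib

open CategoryTheory CategoryTheory.Limits

universe v u

section Aux
variable {C : Type u} [Category.{v} C] [HasFiniteLimits C] [FinitaryExtensive C]
variable {I : Type} [Finite I]

omit [FinitaryExtensive C] in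
lemma isPullback_prodMap_fst {A Z : C} (g : A ⟶ Z) (B : C) :
    IsPullback (prod.map g (𝟙 B)) (prod.fst) (prod.fst) g := by
  refine IsPullback.of_isLimit' ⟨by simp⟩ ?_
  refine PullbackCone.IsLimit.mk _ (fun s => prod.lift s.snd (s.fst ≫ prod.snd)) ?_ ?_ ?_
  · intro s
    apply Limits.prod.hom_ext <;> simp [← s.condition, prod.lift_fst, prod.lift_snd]
  · intro s; simp [prod.lift_fst]
  · intro s m h1 h2
    apply Limits.prod.hom_ext
    · simpa [prod.lift_fst] using h2
    · simpa [prod.lift_snd] using h1 =≫ prod.snd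

lemma pi_pullback_isEquivalence (X : I → C) (c : Cofan X) (hc : IsColimit c) :
    (Functor.pi' fun i => Over.pullback (c.inj i) :
      Over c.pt ⥤ ∀ i, Over (X i)).IsEquivalence := by
  have vK := FinitaryExtensive.isVanKampen_finiteCoproducts hc
  -- every object of `Over c.pt` is the coproduct of its pullbacks along the injections
  have hd : ∀ g : Over c.pt,
      Nonempty (IsColimit (Cofan.mk g.left fun i => pullback.fst g.hom (c.inj i))) := by
    intro g
    refine vK.isUniversal (Cofan.mk g.left fun i => pullback.fst g.hom (c.inj i))
      (Discrete.natTrans fun i => pullback.snd g.hom (c.inj i.as)) g.hom ?_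
      (NatTrans.equifibered_of_discrete _) ?_
    · ext ⟨i⟩
      simpa [Cofan.inj] using pullback.condition.symm
    · rintro ⟨i⟩
      exact IsPullback.of_hasPullback g.hom (c.inj i)
  constructor
  · constructor
    intro g h u v huv
    ext1
    apply (hd g).some.hom_ext
    rintro ⟨i⟩
    have h1 := congrFun huv i
    have h2 := congrArg (fun t => (CommaMorphism.left t) ≫ pullback.fst h.hom (c.inj i)) h1
    exact (pullback.lift_fst _ _ _).symm.trans (h2.trans (pullback.lift_fst _ _ _))
  · constructor
    intro g h w
    have hul : ∀ i, pullback.fst g.hom (c.inj i) ≫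
        (hd g).some.desc (Cofan.mk h.left fun i => (w i).left ≫ pullback.fst h.hom (c.inj i))
        = (w i).left ≫ pullback.fst h.hom (c.inj i) := fun i =>
      (hd g).some.fac _ ⟨i⟩
    have hcomm : (hd g).some.desc
        (Cofan.mk h.left fun i => (w i).left ≫ pullback.fst h.hom (c.inj i)) ≫ h.hom
        = g.hom := by
      apply (hd g).some.hom_ext
      rintro ⟨i⟩
      have := Over.w (w i)
      dsimp at this ⊢
      rw [reassoc_of% (hul i)]
      have key : (w i).left ≫ pullback.snd h.hom (c.inj i) = pullback.snd g.hom (c.inj i) := this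
      exact (Category.assoc _ _ _).trans (((w i).left ≫= pullback.condition).trans
        (((Category.assoc _ _ _).symm.trans (key =≫ c.inj i)).trans pullback.condition.symm))
    refine ⟨Over.homMk ((hd g).some.desc
      (Cofan.mk h.left fun i => (w i).left ≫ pullback.fst h.hom (c.inj i))) hcomm, ?_⟩
    funext i
    ext1
    apply pullback.hom_ext
    · exact (pullback.lift_fst _ _ _).trans (hul i)
    · have := Over.w (w i)
      exact (pullback.lift_snd _ _ _).trans this.symm
  · constructor
    intro f
    let g : Over c.pt := Over.mk (Sigma.desc fun i => (f i).hom ≫ c.inj i)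
    have hpb : ∀ i, IsPullback (Sigma.ι (fun j => (f j).left) i) ((f i).hom) g.hom (c.inj i) := by
      intro i
      refine (vK (Cofan.mk (∐ fun j => (f j).left) fun j => Sigma.ι (fun j => (f j).left) j)
        (Discrete.natTrans fun j => (f j.as).hom) g.hom ?_
        (NatTrans.equifibered_of_discrete _)).mp ⟨coproductIsCoproduct _⟩ ⟨i⟩
      ext ⟨j⟩
      simp [g, Cofan.inj]
    refine ⟨g, ⟨?_⟩⟩
    have ei : ∀ i, (Over.pullback (c.inj i)).obj g ≅ f i := fun i =>
      Over.isoMk (hpb i).isoPullback.symm (by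
        rw [Iso.symm_hom, Iso.inv_comp_eq]
        simpa using ((hpb i).isoPullback_hom_snd).symm)
    exact
      { hom := fun i => (ei i).hom
        inv := fun i => (ei i).inv
        hom_inv_id := by funext i; exact (ei i).hom_inv_id
        inv_hom_id := by funext i; exact (ei i).inv_hom_id }

end Aux

/-- **Statement 5.** If `C` is a lextensive category (finitely complete, with finite
coproducts which are disjoint and universal), then the inclusion `C ↪ Span_C` preserves
finite coproducts: for a finite coproduct `A = ∐ᵢ Aᵢ` in `C` and every object `B`, the
functor `Span_C(A, B) = C/(A × B) ⥤ ∏ᵢ C/(Aᵢ × B) = ∏ᵢ Span_C(Aᵢ, B)`, given by pulling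
back along the spans induced by the coproduct inclusions (i.e. along `ιᵢ × 𝟙 B`), is an
equivalence of hom-categories. -/

theorem span_inclusion_preserves_coproducts
    {C : Type u} [Category.{v} C] [HasFiniteLimits C] [FinitaryExtensive C]
    {I : Type} [Finite I] (A : I → C) (c : Cofan A) (hc : IsColimit c) (B : C) :
    (Functor.pi' fun i =>
        Over.pullback (prod.map (c.inj i) (𝟙 B)) :
      Over (Limits.prod c.pt B) ⥤ ∀ i, Over (Limits.prod (A i) B)).IsEquivalence := by
  have hc' : IsColimit (Cofan.mk (Limits.prod c.pt B) fun i => prod.map (c.inj i) (𝟙 B)) := by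
    refine ((FinitaryPreExtensive.isUniversal_finiteCoproducts hc)
      (Cofan.mk _ fun i => prod.map (c.inj i) (𝟙 B))
      (Discrete.natTrans fun i => prod.fst) prod.fst ?_
      (NatTrans.equifibered_of_discrete _) ?_).some
    · ext ⟨i⟩
      simp [Cofan.inj]
    · rintro ⟨i⟩
      exact isPullback_prodMap_fst (c.inj i) B
  exact pi_pullback_isEquivalence _ (Cofan.mk _ fun i => prod.map (c.inj i) (𝟙 B)) hc'
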